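/- The specification S = S_pq ∪ S_pqs is a model of clause (2): for every ground instance pqs(s(i),cs,us,[t|ds]) ← pqs(i,cs,[t1|us],ds), pq(s(i),cs,us,ds), if both body atoms are in S then the head is in S. -/
import Mathlib


/-- Ground terms of the Herbrand universe: numerals built from `zero`/`succ`,
list constructors `cons`/`nil`, and infinitely many other constants `sym n`. -/
inductive Term : Type
  | zero : Term
  | succ : Term → Term
  | cons : Term → Term → Term
  | nil  : Term
  | sym  : ℕ → Term
deriving DecidableEq

/-- The numeral `sⁱ(0)` representing a natural number. -/
def num : ℕ → Term
  | 0 => Term.zero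
  | n + 1 => Term.succ (num n)

/-- `NthMember k e t` : `e` is the `k`-th member (k ≥ 1) of the term `t`,
i.e. `t = [e₁,…,e_{k-1}, e | t']`. -/
def NthMember : ℕ → Term → Term → Prop
  | 0, _, _ => False
  | 1, e, t => ∃ r, t = Term.cons e r
  | k + 2, e, t => ∃ h r, t = Term.cons h r ∧ NthMember (k + 1) e r

/-- `e` is a member of the term `t`. -/
def IsMember (e t : Term) : Prop := ∃ k, NthMember k e t

/-- `t` is a (proper, nil-terminated) list. -/
inductive IsList : Term → Prop
  | nil : IsList Term.nil
  | cons (h t : Term) : IsList t → IsList (Term.cons h t)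

/-- The members of `cs` are pairwise distinct (no member occurs at two positions). -/
def DistinctMembers (cs : Term) : Prop :=
  ∀ k1 k2 e, NthMember k1 e cs → NthMember k2 e cs → k1 = k2

/-- `(cs,us,ds)` represents a correct placement of queens `1,…,m`
in the context of row `i` (Definition 3 of the paper):
`cs` is a list of distinct members containing `1,…,m`; the up diagonal
numbers `k+j-i` and down diagonal numbers `k+i-j` of the queens `1,…,m`
(queen `j` being the `k`-th member of `cs`) are pairwise distinct; and every
positive such diagonal number `l` of queen `j` is reflected by `j` being the
`l`-th member of `us` (resp. `ds`). -/
def CorrectUpTo (m i : ℕ) (cs us ds : Term) : Prop :=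
  m ≤ i ∧
  IsList cs ∧ DistinctMembers cs ∧
  (∀ j, 1 ≤ j → j ≤ m → IsMember (num j) cs) ∧
  (∀ j1 j2 k1 k2, 1 ≤ j1 → j1 ≤ m → 1 ≤ j2 → j2 ≤ m →
     NthMember k1 (num j1) cs → NthMember k2 (num j2) cs →
     (k1 + j1 : ℤ) - i = (k2 + j2 : ℤ) - i → j1 = j2) ∧
  (∀ j1 j2 k1 k2, 1 ≤ j1 → j1 ≤ m → 1 ≤ j2 → j2 ≤ m →
     NthMember k1 (num j1) cs → NthMember k2 (num j2) cs →
     (k1 + i : ℤ) - j1 = (k2 + i : ℤ) - j2 → j1 = j2) ∧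
  (∀ j k (l : ℤ), 1 ≤ j → j ≤ m → NthMember k (num j) cs →
     (k + j : ℤ) - i = l → 0 < l → NthMember l.toNat (num j) us) ∧
  (∀ j k (l : ℤ), 1 ≤ j → j ≤ m → NthMember k (num j) cs →
     (k + i : ℤ) - j = l → 0 < l → NthMember l.toNat (num j) ds)

/-- Ground atoms of the n-queens program. -/
inductive Atom : Type
  | pq  (i cs us ds : Term)
  | pqs (i cs us ds : Term)
deriving DecidableEq

/-- A ground clause: a head together with the list of body atoms. -/
abbrev Clause := Atom × List Atom

/-- A (ground instantiation of a) definite program. -/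
abbrev Program := Set Clause

/-- `S` is an Herbrand model of `P`. -/
def IsModel (S : Set Atom) (P : Program) : Prop :=
  ∀ c ∈ P, (∀ b ∈ c.2, b ∈ S) → c.1 ∈ S

/-- The least Herbrand model of `P`. -/
def LHM (P : Program) : Set Atom := ⋂₀ {S | IsModel S P}

/-- A ground atom `A` is covered by program `P` w.r.t. specification `S`. -/
def Covered (P : Program) (S : Set Atom) (A : Atom) : Prop :=
  ∃ c ∈ P, c.1 = A ∧ ∀ b ∈ c.2, b ∈ S

/-- The set of ground instances of the two pq clauses:
`pq(I,[I|_],[I|_],[I|_])` and `pq(I,[_|Cs],[_|Us],[_|Ds]) ← pq(I,Cs,Us,Ds)`. -/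
def PQprog : Program :=
  {c | (∃ i x y z, c = (Atom.pq i (Term.cons i x) (Term.cons i y) (Term.cons i z), [])) ∨
       (∃ i c' cs u us d ds,
          c = (Atom.pq i (Term.cons c' cs) (Term.cons u us) (Term.cons d ds),
               [Atom.pq i cs us ds]))}

/-- The set of ground instances of the four clauses of NQUEENS. -/
def NQprog : Program :=
  {c | (∃ x y z, c = (Atom.pqs Term.zero x y z, [])) ∨
       (∃ i cs us u d ds,
          c = (Atom.pqs (Term.succ i) cs us (Term.cons d ds),
               [Atom.pqs i cs (Term.cons u us) ds, Atom.pq (Term.succ i) cs us ds])) ∨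
       (∃ i x y z, c = (Atom.pq i (Term.cons i x) (Term.cons i y) (Term.cons i z), [])) ∨
       (∃ i c' cs u us d ds,
          c = (Atom.pq i (Term.cons c' cs) (Term.cons u us) (Term.cons d ds),
               [Atom.pq i cs us ds]))}

/-- The specification `S_pq`. -/
def Spq : Set Atom :=
  {a | ∃ i cs us ds k, a = Atom.pq i cs us ds ∧ 0 < k ∧
       NthMember k i cs ∧ NthMember k i us ∧ NthMember k i ds}

/-- The correctness specification `S_pqs`. -/
def Spqs : Set Atom :=
  {a | (∃ cs us ds, a = Atom.pqs Term.zero cs us ds) ∨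
       (∃ i cs us t ds, 0 < i ∧ a = Atom.pqs (num i) cs us (Term.cons t ds) ∧
          (∀ j, 1 ≤ j → j ≤ i → IsMember (num j) cs) ∧
          (IsList cs → DistinctMembers cs → CorrectUpTo i i cs us ds))}

/-- The completeness specification `S⁰_pqs`. -/
def S0pqs : Set Atom :=
  {a | ∃ i cs us t ds, 0 < i ∧ a = Atom.pqs (num i) cs us (Term.cons t ds) ∧
        CorrectUpTo i i cs us ds}

/-- All atoms `pqs(0,cs,us,ds)`. -/
def SpqsZero : Set Atom :=
  {a | ∃ cs us ds, a = Atom.pqs Term.zero cs us ds}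

/-- The level mapping on ground terms: `|[h|t]| = 1+|t|`, `|s(t)| = 1+|t|`,
`|f(…)| = 0` otherwise. -/
def tlvl : Term → ℕ
  | Term.cons _ t => 1 + tlvl t
  | Term.succ t => 1 + tlvl t
  | _ => 0

/-- The level mapping on ground atoms. -/
def alvl : Atom → ℕ
  | Atom.pqs i cs _ _ => tlvl i + tlvl cs
  | Atom.pq _ cs _ _ => tlvl cs

/-- `t` is a list of length `n`. -/
inductive IsListLen : Term → ℕ → Prop
  | nil : IsListLen Term.nil 0
  | cons (h t : Term) (n : ℕ) : IsListLen t n → IsListLen (Term.cons h t) (n + 1)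

lemma nth_pos {k : ℕ} {e t : Term} (h : NthMember k e t) : 1 ≤ k := by
  cases k with
  | zero => exact h.elim
  | succ n => omega

lemma nth_cons {k : ℕ} {e r : Term} (h : NthMember k e r) (x : Term) :
    NthMember (k + 1) e (Term.cons x r) := by
  cases k with
  | zero => exact h.elim
  | succ n => exact ⟨x, r, rfl, h⟩

lemma nth_cons_inv {k : ℕ} {e x r : Term}
    (h : NthMember (k + 1) e (Term.cons x r)) (hk : 1 ≤ k) :
    NthMember k e r := by
  cases k with
  | zero => omega
  | succ n =>
    obtain ⟨h', r', he, hr⟩ := h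
    injection he with h1 h2
    subst h2
    exact hr

lemma nth_unique : ∀ (k : ℕ) (e e' t : Term),
    NthMember k e t → NthMember k e' t → e = e' := by
  intro k
  induction k with
  | zero => intro e e' t h; exact h.elim
  | succ n ih =>
    intro e e' t h h'
    cases n with
    | zero =>
      obtain ⟨r, rfl⟩ := h
      obtain ⟨r', he⟩ := h'
      exact (Term.cons.inj he).1
    | succ m =>
      obtain ⟨hd, r, rfl, hr⟩ := h
      obtain ⟨hd', r', he, hr'⟩ := h'
      injection he with h1 h2
      subst h2
      exact ih e e' r hr hr'

lemma num_inj : ∀ {a b : ℕ}, num a = num b → a = b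
  | 0, 0, _ => rfl
  | 0, _ + 1, h => by simp [num] at h
  | _ + 1, 0, h => by simp [num] at h
  | _ + 1, _ + 1, h => by
    injection h with h'
    exact congrArg Nat.succ (num_inj h')

/-- The specification `S = S_pq ∪ S_pqs` is a model of clause (2): for every
ground instance `pqs(s(i),cs,us,[t|ds]) ← pqs(i,cs,[t1|us],ds), pq(s(i),cs,us,ds)`,
if both body atoms are in `S` then the head is in `S`. -/
theorem S_models_clause2 (i cs us t t1 ds : Term)
    (hB1 : Atom.pqs i cs (Term.cons t1 us) ds ∈ Spq ∪ Spqs)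
    (hB2 : Atom.pq (Term.succ i) cs us ds ∈ Spq ∪ Spqs) :
    Atom.pqs (Term.succ i) cs us (Term.cons t ds) ∈ Spq ∪ Spqs := by
  -- hB2 must come from Spq
  rcases hB2 with h2 | h2
  swap
  · exfalso
    rcases h2 with ⟨_, _, _, h⟩ | ⟨_, _, _, _, _, _, h, _⟩ <;> exact Atom.noConfusion h
  obtain ⟨i', cs', us', ds', k, heq, hk0, hc, hu, hd⟩ := h2
  injection heq with e1 e2 e3 e4
  subst e1; subst e2; subst e3; subst e4
  -- hB1 must come from Spqs
  rcases hB1 with h1 | h1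
  · exfalso
    obtain ⟨_, _, _, _, _, h, _⟩ := h1
    exact Atom.noConfusion h
  rcases h1 with ⟨cs', us', ds', heq⟩ | ⟨I, cs', us', t'', ds', hI, heq, hmem, hcorr⟩
  · -- base case: i = 0
    injection heq with e1 e2 e3 e4
    subst e1; subst e2; subst e3; subst e4
    right
    refine Or.inr ⟨1, cs, us, t, ds, one_pos, rfl, ?_, ?_⟩
    · intro j hj1 hj2
      have : j = 1 := by omega
      subst this
      exact ⟨k, hc⟩
    · intro hlist hdist
      refine ⟨le_refl 1, hlist, hdist, ?_, ?_, ?_, ?_, ?_⟩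
      · intro j hj1 hj2
        have : j = 1 := by omega
        subst this
        exact ⟨k, hc⟩
      · intro j1 j2 _ _ h11 h12 h21 h22 _ _ _; omega
      · intro j1 j2 _ _ h11 h12 h21 h22 _ _ _; omega
      · intro j k1 l hj1 hj2 hn hl hlpos
        have : j = 1 := by omega
        subst this
        have hk1 : k1 = k := hdist k1 k _ hn hc
        have : l.toNat = k := by omega
        rw [this]
        exact hu
      · intro j k1 l hj1 hj2 hn hl hlpos
        have : j = 1 := by omega
        subst this
        have hk1 : k1 = k := hdist k1 k _ hn hc
        have : l.toNat = k := by omega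
        rw [this]
        exact hd
  · -- inductive case: i = num I, I > 0
    injection heq with e1 e2 e3 e4
    subst e1; subst e2; subst e3; subst e4
    right
    refine Or.inr ⟨I + 1, cs, us, t, Term.cons t'' ds', by omega, rfl, ?_, ?_⟩
    · intro j hj1 hj2
      rcases Nat.lt_or_ge j (I + 1) with hlt | hge
      · exact hmem j hj1 (by omega)
      · have : j = I + 1 := by omega
        subst this
        exact ⟨k, hc⟩
    · intro hlist hdist
      obtain ⟨_, _, _, Hmem, H5, H6, H7, H8⟩ := hcorr hlist hdist
      refine ⟨le_refl _, hlist, hdist, ?_, ?_, ?_, ?_, ?_⟩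
      · intro j hj1 hj2
        rcases Nat.lt_or_ge j (I + 1) with hlt | hge
        · exact hmem j hj1 (by omega)
        · have : j = I + 1 := by omega
          subst this
          exact ⟨k, hc⟩
      · -- up diagonals pairwise distinct
        intro j1 j2 k1 k2 h11 h12 h21 h22 hn1 hn2 heq2
        rcases Nat.lt_or_ge j1 (I + 1) with hj1I | hj1I <;>
          rcases Nat.lt_or_ge j2 (I + 1) with hj2I | hj2I
        · exact H5 j1 j2 k1 k2 h11 (by omega) h21 (by omega) hn1 hn2 (by omega)
        · have hj2 : j2 = I + 1 := by omega
          subst hj2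
          have hk2 : k2 = k := hdist k2 k _ hn2 hc
          subst hk2
          have h7 := H7 j1 k1 ((k2 : ℤ) + 1) h11 (by omega) hn1 (by omega) (by omega)
          have e : ((k2 : ℤ) + 1).toNat = k2 + 1 := by omega
          rw [e] at h7
          have h7' : NthMember k2 (num j1) us := nth_cons_inv h7 (by omega)
          have := nth_unique k2 _ _ us h7' hu
          have := num_inj (a := j1) (b := I + 1) this
          omega
        · have hj1' : j1 = I + 1 := by omega
          subst hj1'
          have hk1 : k1 = k := hdist k1 k _ hn1 hc
          subst hk1
          have h7 := H7 j2 k2 ((k1 : ℤ) + 1) h21 (by omega) hn2 (by omega) (by omega)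
          have e : ((k1 : ℤ) + 1).toNat = k1 + 1 := by omega
          rw [e] at h7
          have h7' : NthMember k1 (num j2) us := nth_cons_inv h7 (by omega)
          have := nth_unique k1 _ _ us h7' hu
          have := num_inj (a := j2) (b := I + 1) this
          omega
        · omega
      · -- down diagonals pairwise distinct
        intro j1 j2 k1 k2 h11 h12 h21 h22 hn1 hn2 heq2
        rcases Nat.lt_or_ge j1 (I + 1) with hj1I | hj1I <;>
          rcases Nat.lt_or_ge j2 (I + 1) with hj2I | hj2I
        · exact H6 j1 j2 k1 k2 h11 (by omega) h21 (by omega) hn1 hn2 (by omega)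
        · have hj2 : j2 = I + 1 := by omega
          subst hj2
          have hk2 : k2 = k := hdist k2 k _ hn2 hc
          subst hk2
          have hp1 : 1 ≤ k1 := nth_pos hn1
          have hk2' : 2 ≤ k2 := by omega
          obtain ⟨m, rfl⟩ : ∃ m, k2 = m + 2 := ⟨k2 - 2, by omega⟩
          have hd' : NthMember (m + 1) (Term.succ (num I)) ds' :=
            nth_cons_inv hd (by omega)
          have h8 := H8 j1 k1 ((m : ℤ) + 1) h11 (by omega) hn1 (by omega) (by omega)
          have e : ((m : ℤ) + 1).toNat = m + 1 := by omega
          rw [e] at h8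
          have := nth_unique (m + 1) _ _ ds' h8 hd'
          have := num_inj (a := j1) (b := I + 1) this
          omega
        · have hj1' : j1 = I + 1 := by omega
          subst hj1'
          have hk1 : k1 = k := hdist k1 k _ hn1 hc
          subst hk1
          have hp2 : 1 ≤ k2 := nth_pos hn2
          have hk1' : 2 ≤ k1 := by omega
          obtain ⟨m, rfl⟩ : ∃ m, k1 = m + 2 := ⟨k1 - 2, by omega⟩
          have hd' : NthMember (m + 1) (Term.succ (num I)) ds' :=
            nth_cons_inv hd (by omega)
          have h8 := H8 j2 k2 ((m : ℤ) + 1) h21 (by omega) hn2 (by omega) (by omega)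
          have e : ((m : ℤ) + 1).toNat = m + 1 := by omega
          rw [e] at h8
          have := nth_unique (m + 1) _ _ ds' h8 hd'
          have := num_inj (a := j2) (b := I + 1) this
          omega
        · omega
      · -- up diagonal membership
        intro j k1 l hj1 hj2 hn hl hlpos
        rcases Nat.lt_or_ge j (I + 1) with hjI | hjI
        · have h7 := H7 j k1 (l + 1) hj1 (by omega) hn (by omega) (by omega)
          have e : (l + 1).toNat = l.toNat + 1 := by omega
          rw [e] at h7
          exact nth_cons_inv h7 (by omega)
        · have : j = I + 1 := by omega
          subst this
          have hk1 : k1 = k := hdist k1 k _ hn hc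
          have : l.toNat = k := by omega
          rw [this]
          exact hu
      · -- down diagonal membership
        intro j k1 l hj1 hj2 hn hl hlpos
        rcases Nat.lt_or_ge j (I + 1) with hjI | hjI
        · have hp : 1 ≤ k1 := nth_pos hn
          have h8 := H8 j k1 (l - 1) hj1 (by omega) hn (by omega) (by omega)
          have e : l.toNat = (l - 1).toNat + 1 := by omega
          rw [e]
          exact nth_cons h8 t''
        · have : j = I + 1 := by omega
          subst this
          have hk1 : k1 = k := hdist k1 k _ hn hc
          have : l.toNat = k := by omega
          rw [this]
          exact hd
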